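/- The optimal trajectory contains the half-line L^u_{N_u,N_d}: if (w, b) ∈ ℝ² satisfies wR + b(u − R) = x^u_{N_u} and wR + b(d − R) ≥ x^d_{N_d}, then β(w) = b (in particular H(w, b) = V(w)). -/

import Mathlib

/-- `f` is affine on the set `s`. -/
def AffOn (f : ℝ → ℝ) (s : Set ℝ) : Prop := ∃ a c : ℝ, ∀ y ∈ s, f y = a * y + c

/-- Left derivative of `f` at `x`. -/
noncomputable def lDeriv (f : ℝ → ℝ) (x : ℝ) : ℝ := derivWithin f (Set.Iio x) x

/-- Right derivative of `f` at `x`. -/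
noncomputable def rDeriv (f : ℝ → ℝ) (x : ℝ) : ℝ := derivWithin f (Set.Ioi x) x

/-- `f` is piecewise affine with partition points `x 1 < x 2 < … < x N`
(no partition points if `N = 0`, in which case `f` is affine on all of `ℝ`). -/
def PWAff (f : ℝ → ℝ) (N : ℕ) (x : ℕ → ℝ) : Prop :=
  (∀ i, 1 ≤ i → i + 1 ≤ N → x i < x (i + 1)) ∧
  (N = 0 → AffOn f Set.univ) ∧
  (1 ≤ N → AffOn f (Set.Iic (x 1)) ∧ AffOn f (Set.Ici (x N)) ∧
    ∀ i, 1 ≤ i → i + 1 ≤ N → AffOn f (Set.Icc (x i) (x (i + 1))))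

/-- `f` belongs to class `H` as witnessed by the points `x 1 < … < x N`:
piecewise linear, concave on `ℝ`, and eventually constant. -/
def ClassHAux (f : ℝ → ℝ) (N : ℕ) (x : ℕ → ℝ) : Prop :=
  PWAff f N x ∧ ConcaveOn ℝ Set.univ f ∧ ∃ xb : ℝ, ∀ y, xb ≤ y → f y = f xb

/-- `f` belongs to class `H`. -/
def ClassH (f : ℝ → ℝ) : Prop := ∃ N x, ClassHAux f N x

/-- `x 1 < … < x N` are the singular values of the class-`H` function `f`:
they partition `ℝ` into pieces on which `f` is affine and each of them is a genuine
kink, i.e. the right derivative is strictly smaller than the left derivative there. -/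
def HasSingVals (f : ℝ → ℝ) (N : ℕ) (x : ℕ → ℝ) : Prop :=
  ClassHAux f N x ∧ ∀ i, 1 ≤ i → i ≤ N → rDeriv f (x i) < lDeriv f (x i)

/-- The dynamic-programming objective
`H(w,b) = R⁻¹ (p f(wR + b(u−R)) + (1−p) g(wR + b(d−R)))`. -/
noncomputable def Hfun (R u d p : ℝ) (f g : ℝ → ℝ) (w b : ℝ) : ℝ :=
  R⁻¹ * (p * f (w * R + b * (u - R)) + (1 - p) * g (w * R + b * (d - R)))

/-- The value function `V(w) = sup_b H(w,b)`. -/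
noncomputable def Vfun (R u d p : ℝ) (f g : ℝ → ℝ) (w : ℝ) : ℝ :=
  ⨆ b : ℝ, Hfun R u d p f g w b

/-- The set of maximizers `B(w) = {b : H(w,b) = V(w)}`. -/
noncomputable def Bset (R u d p : ℝ) (f g : ℝ → ℝ) (w : ℝ) : Set ℝ :=
  {b : ℝ | Hfun R u d p f g w b = Vfun R u d p f g w}

/-- The minimal optimal strategy `β(w) = min B(w)`. -/
noncomputable def betaFun (R u d p : ℝ) (f g : ℝ → ℝ) (w : ℝ) : ℝ :=
  sInf (Bset R u d p f g w)

/-- The grid line `C^u = {(w,b) : wR + b(u−R) = c}`. -/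
def Cu (R u : ℝ) (c : ℝ) : Set (ℝ × ℝ) := {pt | pt.1 * R + pt.2 * (u - R) = c}

/-- The grid line `C^d = {(w,b) : wR + b(d−R) = c}`. -/
def Cd (R d : ℝ) (c : ℝ) : Set (ℝ × ℝ) := {pt | pt.1 * R + pt.2 * (d - R) = c}

/-- The grid `G`, the union of the lines `C^u_i`, `1 ≤ i ≤ Nu`, and `C^d_j`, `1 ≤ j ≤ Nd`. -/
def Grid (R u d : ℝ) (Nu : ℕ) (xu : ℕ → ℝ) (Nd : ℕ) (xd : ℕ → ℝ) : Set (ℝ × ℝ) :=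
  (⋃ i ∈ Finset.Icc 1 Nu, Cu R u (xu i)) ∪ (⋃ j ∈ Finset.Icc 1 Nd, Cd R d (xd j))

/-- The open parallelogram `D_ij`, for `0 ≤ i ≤ Nu`, `0 ≤ j ≤ Nd`, with the conventions
`x^u_0 = x^d_0 = −∞` and `x^u_{Nu+1} = x^d_{Nd+1} = +∞`. -/
def Dset (R u d : ℝ) (Nu : ℕ) (xu : ℕ → ℝ) (Nd : ℕ) (xd : ℕ → ℝ) (i j : ℕ) : Set (ℝ × ℝ) :=
  {pt | (1 ≤ i → xu i < pt.1 * R + pt.2 * (u - R)) ∧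
        (i < Nu → pt.1 * R + pt.2 * (u - R) < xu (i + 1)) ∧
        (1 ≤ j → xd j < pt.1 * R + pt.2 * (d - R)) ∧
        (j < Nd → pt.1 * R + pt.2 * (d - R) < xd (j + 1))}

open Set in
lemma le_const_of_concave (f : ℝ → ℝ) (hconc : ConcaveOn ℝ Set.univ f) (xb : ℝ)
    (hxb : ∀ y, xb ≤ y → f y = f xb) : ∀ y, f y ≤ f xb := by
  intro y
  rcases le_or_gt xb y with h | h
  · exact (hxb y h).le
  · have hz : xb ≤ 2 * xb - y := by linarith
    have h1 : f (2 * xb - y) = f xb := hxb _ hz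
    have h2 := hconc.2 (mem_univ y) (mem_univ (2 * xb - y))
      (by norm_num : (0:ℝ) ≤ 1/2) (by norm_num : (0:ℝ) ≤ 1/2) (by norm_num)
    simp only [smul_eq_mul] at h2
    have h3 : (1/2 : ℝ) * y + (1/2) * (2 * xb - y) = xb := by ring
    rw [h3] at h2
    linarith

open Set in
lemma mono_of_concave (f : ℝ → ℝ) (hconc : ConcaveOn ℝ Set.univ f) (xb : ℝ)
    (hxb : ∀ y, xb ≤ y → f y = f xb) : Monotone f := by
  have hub := le_const_of_concave f hconc xb hxb
  intro y y' hyy'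
  rcases eq_or_lt_of_le hyy' with rfl | hlt
  · exact le_refl _
  set z : ℝ := max xb y' + 1 with hz
  have hzy' : y' < z := by
    have := le_max_right xb y'
    simp only [hz]; linarith
  have hzxb : xb ≤ z := by
    have := le_max_left xb y'
    simp only [hz]; linarith
  have hzy : y < z := lt_trans hlt hzy'
  set t : ℝ := (z - y') / (z - y) with ht
  have hzy0 : (0:ℝ) < z - y := by linarith
  have ht0 : 0 < t := div_pos (by linarith) hzy0
  have ht1 : t < 1 := (div_lt_one hzy0).2 (by linarith)
  have hcomb : t * y + (1 - t) * z = y' := by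
    rw [ht, div_mul_eq_mul_div, one_sub_div hzy0.ne', div_mul_eq_mul_div, ← add_div,
      div_eq_iff hzy0.ne']
    ring
  have h2 := hconc.2 (mem_univ y) (mem_univ z) ht0.le (by linarith : (0:ℝ) ≤ 1 - t)
    (by ring)
  simp only [smul_eq_mul] at h2
  rw [hcomb] at h2
  have hfz : f z = f xb := hxb _ hzxb
  have hy' : f y' ≤ f xb := hub y'
  have key : t * f y ≤ t * f y' := by nlinarith
  exact le_of_mul_le_mul_left key ht0

open Set in
lemma const_on_Ici (f : ℝ → ℝ) (xN : ℝ) (haff : AffOn f (Set.Ici xN))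
    (xb : ℝ) (hxb : ∀ y, xb ≤ y → f y = f xb) : ∀ y, xN ≤ y → f y = f xN := by
  obtain ⟨a, c, hac⟩ := haff
  set z : ℝ := max xb xN with hzdef
  have hz1 : xb ≤ z + 1 := by have := le_max_left xb xN; simp only [hzdef]; linarith
  have hz2 : xb ≤ z + 2 := by linarith
  have hz1' : xN ≤ z + 1 := by have := le_max_right xb xN; simp only [hzdef]; linarith
  have hz2' : xN ≤ z + 2 := by linarith
  have e1 : a * (z + 1) + c = f xb := by rw [← hac _ hz1']; exact hxb _ hz1
  have e2 : a * (z + 2) + c = f xb := by rw [← hac _ hz2']; exact hxb _ hz2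
  have ha : a = 0 := by linarith
  intro y hy
  rw [hac y hy, hac xN (mem_Ici.2 le_rfl), ha]; ring

lemma affine_hasDerivAt (a c x : ℝ) : HasDerivAt (fun y : ℝ => a * y + c) a x := by
  simpa using ((hasDerivAt_id x).const_mul a).add_const c

open Set in
lemma const_of_sing (f : ℝ → ℝ) (N : ℕ) (x : ℕ → ℝ) (hsv : HasSingVals f N x)
    (hN : 1 ≤ N) : ∀ y, x N ≤ y → f y = f (x N) := by
  obtain ⟨⟨⟨hord, h0, hpieces⟩, hconc, xb, hxb⟩, hkink⟩ := hsv
  obtain ⟨affL, affR, affM⟩ := hpieces hN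
  exact const_on_Ici f (x N) affR xb hxb

open Set in
lemma lt_last_of_sing (f : ℝ → ℝ) (N : ℕ) (x : ℕ → ℝ) (hsv : HasSingVals f N x)
    (hN : 1 ≤ N) : ∀ y, y < x N → f y < f (x N) := by
  have hconst := const_of_sing f N x hsv hN
  obtain ⟨⟨⟨hord, h0, hpieces⟩, hconc, xb, hxb⟩, hkink⟩ := hsv
  obtain ⟨affL, affR, affM⟩ := hpieces hN
  have hr0 : rDeriv f (x N) = 0 := by
    have hc : HasDerivWithinAt (fun _ : ℝ => f (x N)) 0 (Ioi (x N)) (x N) :=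
      (hasDerivAt_const _ _).hasDerivWithinAt
    have hf0 : HasDerivWithinAt f 0 (Ioi (x N)) (x N) :=
      hc.congr (fun y hy => hconst y (le_of_lt hy)) rfl
    exact hf0.derivWithin (uniqueDiffWithinAt_Ioi _)
  rcases Nat.lt_or_ge N 2 with hN2 | hN2
  · obtain rfl : N = 1 := by omega
    obtain ⟨a, c, hac⟩ := affL
    have hl : lDeriv f (x 1) = a := by
      have hfa : HasDerivWithinAt f a (Iio (x 1)) (x 1) :=
        (affine_hasDerivAt a c (x 1)).hasDerivWithinAt.congr
          (fun y hy => hac y (mem_Iic.2 (le_of_lt hy))) (hac (x 1) (mem_Iic.2 le_rfl))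
      exact hfa.derivWithin (uniqueDiffWithinAt_Iio _)
    have ha : 0 < a := by
      have := hkink 1 le_rfl le_rfl
      rw [hr0, hl] at this; exact this
    intro y hy
    rw [hac y (mem_Iic.2 hy.le), hac (x 1) (mem_Iic.2 le_rfl)]
    nlinarith
  · have hi1 : 1 ≤ N - 1 := by omega
    have hi2 : N - 1 + 1 = N := by omega
    have hm : x (N - 1) < x N := by
      have := hord (N - 1) hi1 (by omega)
      rwa [hi2] at this
    obtain ⟨a, c, hac⟩ := affM (N - 1) hi1 (by omega)
    rw [hi2] at hac
    have hl : lDeriv f (x N) = a := by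
      have hev : f =ᶠ[nhdsWithin (x N) (Iio (x N))] fun y => a * y + c := by
        filter_upwards [self_mem_nhdsWithin,
          mem_nhdsWithin_of_mem_nhds (Ioi_mem_nhds hm)] with y hy1 hy2
        exact hac y ⟨le_of_lt hy2, le_of_lt hy1⟩
      have hfa : HasDerivWithinAt f a (Iio (x N)) (x N) :=
        (affine_hasDerivAt a c (x N)).hasDerivWithinAt.congr_of_eventuallyEq hev
          (hac (x N) ⟨hm.le, le_rfl⟩)
      exact hfa.derivWithin (uniqueDiffWithinAt_Iio _)
    have ha : 0 < a := by
      have := hkink N hN le_rfl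
      rw [hr0, hl] at this; exact this
    have hmono : Monotone f := mono_of_concave f hconc xb hxb
    intro y hy
    have hfxN : f (x N) = a * (x N) + c := hac (x N) ⟨hm.le, le_rfl⟩
    rcases le_or_gt (x (N - 1)) y with hmy | hmy
    · rw [hac y ⟨hmy, hy.le⟩, hfxN]; nlinarith
    · have h1 : f y ≤ f (x (N - 1)) := hmono hmy.le
      have h2 : f (x (N - 1)) = a * x (N - 1) + c := hac _ ⟨le_rfl, hm.le⟩
      rw [hfxN]; nlinarith

lemma le_last_of_sing (f : ℝ → ℝ) (N : ℕ) (x : ℕ → ℝ) (hsv : HasSingVals f N x)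
    (hN : 1 ≤ N) : ∀ y, f y ≤ f (x N) := by
  intro y
  rcases lt_or_ge y (x N) with h | h
  · exact (lt_last_of_sing f N x hsv hN y h).le
  · exact (const_of_sing f N x hsv hN y h).le

/-- The optimal trajectory contains the half-line `L^u_{Nu,Nd}`:
if `wR + b(u−R) = x^u_{Nu}` and `wR + b(d−R) ≥ x^d_{Nd}`, then `β(w) = b`
(and in particular `H(w,b) = V(w)`). -/
theorem stmt_9 (R u d p : ℝ) (hd : 0 < d) (hdR : d < R) (hRu : R < u)
    (hp0 : 0 < p) (hp1 : p < 1)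
    (f g : ℝ → ℝ) (Nu Nd : ℕ) (xu xd : ℕ → ℝ)
    (hf : HasSingVals f Nu xu) (hg : HasSingVals g Nd xd)
    (hNu : 1 ≤ Nu) (hNd : 1 ≤ Nd)
    (hfnc : ∃ a b : ℝ, f a ≠ f b) (hgnc : ∃ a b : ℝ, g a ≠ g b)
    (w b : ℝ) (hu : w * R + b * (u - R) = xu Nu) (hdd : xd Nd ≤ w * R + b * (d - R)) :
    betaFun R u d p f g w = b ∧ Hfun R u d p f g w b = Vfun R u d p f g w := by
  have hR : 0 < R := lt_trans hd hdR
  have hRinv : 0 < R⁻¹ := inv_pos.2 hR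
  have huR : 0 < u - R := by linarith
  have hdR' : d - R < 0 := by linarith
  have hfA : f (w * R + b * (u - R)) = f (xu Nu) := by rw [hu]
  have hgD : g (w * R + b * (d - R)) = g (xd Nd) :=
    const_of_sing g Nd xd hg hNd _ hdd
  have hmax : ∀ b', Hfun R u d p f g w b' ≤ Hfun R u d p f g w b := by
    intro b'
    unfold Hfun
    have h1 : f (w * R + b' * (u - R)) ≤ f (xu Nu) := le_last_of_sing f Nu xu hf hNu _
    have h2 : g (w * R + b' * (d - R)) ≤ g (xd Nd) := le_last_of_sing g Nd xd hg hNd _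
    rw [hfA, hgD]
    exact mul_le_mul_of_nonneg_left
      (add_le_add (mul_le_mul_of_nonneg_left h1 hp0.le)
        (mul_le_mul_of_nonneg_left h2 (by linarith))) hRinv.le
  have hstrict : ∀ b', b' < b → Hfun R u d p f g w b' < Hfun R u d p f g w b := by
    intro b' hb'
    unfold Hfun
    have hA : w * R + b' * (u - R) < xu Nu := by rw [← hu]; nlinarith
    have h1 : f (w * R + b' * (u - R)) < f (xu Nu) := lt_last_of_sing f Nu xu hf hNu _ hA
    have hD : xd Nd ≤ w * R + b' * (d - R) := by nlinarith
    have h2 : g (w * R + b' * (d - R)) = g (xd Nd) := const_of_sing g Nd xd hg hNd _ hD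
    rw [hfA, hgD, h2]
    refine mul_lt_mul_of_pos_left ?_ hRinv
    have := mul_lt_mul_of_pos_left h1 hp0
    linarith
  have hbdd : BddAbove (Set.range (Hfun R u d p f g w)) :=
    ⟨Hfun R u d p f g w b, by rintro _ ⟨b', rfl⟩; exact hmax b'⟩
  have hVb : Hfun R u d p f g w b = Vfun R u d p f g w :=
    le_antisymm (le_ciSup hbdd b) (ciSup_le hmax)
  refine ⟨?_, hVb⟩
  have hmem : b ∈ Bset R u d p f g w := hVb
  have hlb : ∀ b'' ∈ Bset R u d p f g w, b ≤ b'' := by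
    intro b'' hb''
    by_contra hcon
    push_neg at hcon
    have hs := hstrict b'' hcon
    have hb2 : Hfun R u d p f g w b'' = Vfun R u d p f g w := hb''
    rw [hb2, hVb] at hs
    exact lt_irrefl _ hs
  exact le_antisymm (csInf_le ⟨b, hlb⟩ hmem) (le_csInf ⟨b, hmem⟩ hlb)
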